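/- arXiv:1211.5588 — 7 statements merged into one kernel-verified Lean document; each statement's English description precedes it below -/
import Mathlib

section
/- In an LA-semihypergroup H with pure left identity e, the identity x ∘ (y ∘ z) = y ∘ (x ∘ z) holds for all x, y, z ∈ H (where ∘ is extended to sets elementwise). -/
open Set

/-- Elementwise extension of a hyperoperation to subsets:
`hmul op A B = ⋃_{a∈A, b∈B} op a b`. -/
def hmul {H : Type*} (op : H → H → Set H) (A B : Set H) : Set H :=
  ⋃ a ∈ A, ⋃ b ∈ B, op a b

theorem stmt0 {H : Type*} (op : H → H → Set H)
    (hne : ∀ a b : H, (op a b).Nonempty)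
    (hLA : ∀ x y z : H, hmul op (op x y) {z} = hmul op (op z y) {x})
    (e : H) (he : ∀ a : H, op e a = {a}) :
    ∀ x y z : H, hmul op {x} (op y z) = hmul op {y} (op x z) := by
  intro x y z
  -- key : a ∘ b = (b ∘ a) ∘ e
  have key : ∀ a b : H, op a b = hmul op (op b a) {e} := by
    intro a b
    have h1 : hmul op (op e a) {b} = hmul op (op b a) {e} := hLA e a b
    rw [he a] at h1
    rw [← h1]
    ext t
    simp [hmul]
  -- L : {a} ∘ S = (S ∘ {a}) ∘ {e}
  have L : ∀ (a : H) (S : Set H),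
      hmul op {a} S = hmul op (hmul op S {a}) {e} := by
    intro a S
    ext t
    simp only [hmul, mem_iUnion, mem_singleton_iff, exists_prop]
    constructor
    · rintro ⟨u, hu, s, hs, ht⟩
      subst hu
      rw [key] at ht
      simp only [hmul, mem_iUnion, mem_singleton_iff, exists_prop] at ht
      obtain ⟨w, hw, v, hv, htw⟩ := ht
      exact ⟨w, ⟨s, hs, u, rfl, hw⟩, v, hv, htw⟩
    · rintro ⟨w, ⟨s, hs, v, hv, hw⟩, u, hu, htw⟩
      refine ⟨a, rfl, s, hs, ?_⟩
      rw [key]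
      simp only [hmul, mem_iUnion, mem_singleton_iff, exists_prop]
      exact ⟨w, hv ▸ hw, u, hu, htw⟩
  rw [L x (op y z), L y (op x z), hLA y z x]
end

section
/- If an LA-semihypergroup H has a pure right identity e, then e is also a pure left identity, i.e., e ∘ b = {b} for all b ∈ H. -/
open Set

theorem stmt4 {H : Type*} (op : H → H → Set H)
    (hne : ∀ a b : H, (op a b).Nonempty)
    (hLA : ∀ x y z : H, hmul op (op x y) {z} = hmul op (op z y) {x})
    (e : H) (he : ∀ b : H, op b e = {b}) :
    ∀ b : H, op e b = {b} := by
  intro b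
  have hsing : ∀ a c : H, hmul op {a} {c} = op a c := by
    intro a c
    simp [hmul]
  have h1 : hmul op (op e e) {b} = hmul op (op b e) {e} := hLA e e b
  rw [he e, he b, hsing, hsing, he b] at h1
  exact h1
end

section
/- An LA-semihypergroup H is a semihypergroup (i.e., ∘ is associative: (a ∘ b) ∘ c = a ∘ (b ∘ c)) if and only if a ∘ (b ∘ c) = (c ∘ b) ∘ a holds for all a, b, c ∈ H. -/
open Set

theorem stmt5 {H : Type*} (op : H → H → Set H)
    (hne : ∀ a b : H, (op a b).Nonempty)
    (hLA : ∀ x y z : H, hmul op (op x y) {z} = hmul op (op z y) {x}) :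
    (∀ a b c : H, hmul op (op a b) {c} = hmul op {a} (op b c)) ↔
      (∀ a b c : H, hmul op {a} (op b c) = hmul op (op c b) {a}) := by
  constructor
  · intro h a b c
    rw [← h a b c, hLA]
  · intro h a b c
    rw [hLA, h]
end

section
/- Every left invertible LA-semihypergroup H with pure left identity e is intra-regular: for every a ∈ H there exist x, y ∈ H with a ∈ (x ∘ (a ∘ a)) ∘ y. (Indeed a ∈ (H ∘ (a ∘ a)) ∘ H.) -/
open Set

lemma mem_hmul {H : Type*} (op : H → H → Set H) (A B : Set H) (t : H) :
    t ∈ hmul op A B ↔ ∃ a ∈ A, ∃ b ∈ B, t ∈ op a b := by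
  simp [hmul]

theorem stmt6 {H : Type*} (op : H → H → Set H)
    (hne : ∀ a b : H, (op a b).Nonempty)
    (hLA : ∀ x y z : H, hmul op (op x y) {z} = hmul op (op z y) {x})
    (e : H) (he : ∀ a : H, op e a = {a})
    (hinv : ∀ a : H, ∃ a' : H, e ∈ op a' a) :
    ∀ a : H, (∃ x y : H, a ∈ hmul op (hmul op {x} (op a a)) {y}) ∧
      a ∈ hmul op (hmul op Set.univ (op a a)) Set.univ := by
  intro a
  obtain ⟨a', ha'⟩ := hinv a
  -- a ∈ (a'a)a = (aa)a'
  have h1 : a ∈ hmul op (op a' a) {a} := by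
    rw [mem_hmul]
    exact ⟨e, ha', a, rfl, by rw [he a]; rfl⟩
  rw [hLA a' a a, mem_hmul] at h1
  obtain ⟨p, hp, b, hb, hab⟩ := h1
  rw [Set.mem_singleton_iff] at hb
  rw [hb] at hab
  -- so a ∈ op p a', p ∈ op a a
  -- p ∈ op a a ⊆ (p a')a = (a a')p
  have h2 : p ∈ hmul op (op p a') {a} := by
    rw [mem_hmul]
    exact ⟨a, hab, a, rfl, hp⟩
  rw [hLA p a' a, mem_hmul] at h2
  obtain ⟨x, hx, c, hc, hxc⟩ := h2
  rw [Set.mem_singleton_iff] at hc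
  rw [hc] at hxc
  -- x ∈ op a a', p ∈ op x p
  -- main fact with witnesses x, a'
  have key : a ∈ hmul op (hmul op {x} (op a a)) {a'} := by
    rw [mem_hmul]
    refine ⟨p, ?_, a', rfl, hab⟩
    rw [mem_hmul]
    exact ⟨x, rfl, p, hp, hxc⟩
  refine ⟨⟨x, a', key⟩, ?_⟩
  rw [mem_hmul]
  refine ⟨p, ?_, a', trivial, hab⟩
  rw [mem_hmul]
  exact ⟨x, trivial, p, hp, hxc⟩
end

section
/- If H is an LA-semihypergroup with a left identity such that H ∘ a = H for all a ∈ H, then H is intra-regular: every a ∈ H satisfies a ∈ (H ∘ (a ∘ a)) ∘ H. -/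
open Set

theorem stmt7 {H : Type*} (op : H → H → Set H)
    (hne : ∀ a b : H, (op a b).Nonempty)
    (hLA : ∀ x y z : H, hmul op (op x y) {z} = hmul op (op z y) {x})
    (e : H) (he : ∀ a : H, a ∈ op e a)
    (h : ∀ a : H, hmul op Set.univ {a} = Set.univ) :
    ∀ a : H, a ∈ hmul op (hmul op Set.univ (op a a)) Set.univ := by
  intro a
  -- a ∈ univ = H ∘ a, so ∃ x, a ∈ op x a
  have h1 : a ∈ hmul op Set.univ {a} := by rw [h a]; trivial
  simp only [hmul, mem_iUnion, mem_singleton_iff, exists_prop, mem_univ, true_and] at h1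
  obtain ⟨x, b, hb, hxa⟩ := h1; rw [hb] at hxa
  -- x ∈ univ = H ∘ a, so ∃ y, x ∈ op y a
  have h2 : x ∈ hmul op Set.univ {a} := by rw [h a]; trivial
  simp only [hmul, mem_iUnion, mem_singleton_iff, exists_prop, mem_univ, true_and] at h2
  obtain ⟨y, b, hb2, hya⟩ := h2; rw [hb2] at hya
  -- a ∈ op x a ⊆ (op y a) ∘ {a} = (op a a) ∘ {y}
  have h3 : a ∈ hmul op (op y a) {a} := by
    simp only [hmul, mem_iUnion, mem_singleton_iff, exists_prop]
    exact ⟨x, hya, a, rfl, hxa⟩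
  rw [hLA y a a] at h3
  simp only [hmul, mem_iUnion, mem_singleton_iff, exists_prop] at h3
  obtain ⟨t, hta, b, hb3, hat⟩ := h3; rw [hb3] at hat
  -- t ∈ op e t ⊆ H ∘ (a ∘ a), and a ∈ op t y
  simp only [hmul, mem_iUnion, mem_univ, true_and, exists_prop]
  exact ⟨t, ⟨e, t, hta, he t⟩, y, hat⟩
end

section
/- If H is an LA-semihypergroup with a left identity such that a ∘ H = H for all a ∈ H, then also H ∘ a = H for all a ∈ H, and hence H is intra-regular. -/
open Set

theorem stmt8 {H : Type*} (op : H → H → Set H)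
    (hne : ∀ a b : H, (op a b).Nonempty)
    (hLA : ∀ x y z : H, hmul op (op x y) {z} = hmul op (op z y) {x})
    (e : H) (he : ∀ a : H, a ∈ op e a)
    (h : ∀ a : H, hmul op {a} Set.univ = Set.univ) :
    (∀ a : H, hmul op Set.univ {a} = Set.univ) ∧
      (∀ a : H, ∃ x y : H, a ∈ hmul op (hmul op {x} (op a a)) {y}) := by
  have hmem : ∀ (A B : Set H) (c : H),
      c ∈ hmul op A B ↔ ∃ a ∈ A, ∃ b ∈ B, c ∈ op a b := by
    intro A B c; simp [hmul]
  -- hmul op univ {a} is constant in a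
  have hconst : ∀ a b : H, hmul op Set.univ {a} ⊆ hmul op Set.univ {b} := by
    intro a b c hc
    rw [hmem] at hc
    obtain ⟨x, -, a', ha', hcx⟩ := hc
    rw [mem_singleton_iff] at ha'; rw [ha'] at hcx
    -- x ∈ univ = hmul {b} univ, so x ∈ op b y for some y
    have hx : x ∈ hmul op {b} Set.univ := by rw [h b]; trivial
    rw [hmem] at hx
    obtain ⟨b', hb', y, -, hxy⟩ := hx
    rw [mem_singleton_iff] at hb'; rw [hb'] at hxy
    have : c ∈ hmul op (op b y) {a} := by
      rw [hmem]; exact ⟨x, hxy, a, rfl, hcx⟩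
    rw [hLA] at this
    rw [hmem] at this
    obtain ⟨z, hz, b'', hb'', hcz⟩ := this
    rw [mem_singleton_iff] at hb''; rw [hb''] at hcz
    rw [hmem]
    exact ⟨z, trivial, b, rfl, hcz⟩
  constructor
  · intro a
    apply eq_univ_of_univ_subset
    intro c _
    have : c ∈ hmul op Set.univ {c} := by
      rw [hmem]; exact ⟨e, trivial, c, rfl, he c⟩
    exact hconst c a this
  · intro a
    obtain ⟨s, hs⟩ := hne a a
    obtain ⟨u, hu⟩ := hne e s
    have ha : a ∈ hmul op {u} Set.univ := by rw [h u]; trivial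
    rw [hmem] at ha
    obtain ⟨u', hu', y, -, hay⟩ := ha
    rw [mem_singleton_iff] at hu'; rw [hu'] at hay
    refine ⟨e, y, ?_⟩
    rw [hmem]
    refine ⟨u, ?_, y, rfl, hay⟩
    rw [hmem]
    exact ⟨e, rfl, s, hs, hu⟩
end

section
/- If H is an intra-regular LA-semihypergroup with pure left identity, then for every bi-hyperideal B of H one has (B ∘ H) ∘ B = B. -/
open Set

namespace StmtAux9

variable {H : Type*} (op : H → H → Set H)

lemma mem_hmul {A B : Set H} {t : H} :
    t ∈ hmul op A B ↔ ∃ a ∈ A, ∃ b ∈ B, t ∈ op a b := by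
  simp [hmul]

lemma hmul_mono {A A' B B' : Set H} (h1 : A ⊆ A') (h2 : B ⊆ B') :
    hmul op A B ⊆ hmul op A' B' := by
  intro t ht
  rw [mem_hmul] at ht ⊢
  obtain ⟨a, ha, b, hb, h⟩ := ht
  exact ⟨a, h1 ha, b, h2 hb, h⟩

lemma hmul_sing (a b : H) : hmul op {a} {b} = op a b := by
  simp [hmul]

lemma mem_m3 {U V W : Set H} {t : H} :
    t ∈ hmul op (hmul op U V) W ↔
      ∃ u ∈ U, ∃ v ∈ V, ∃ w ∈ W, t ∈ hmul op (op u v) {w} := by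
  simp only [mem_hmul, mem_singleton_iff]
  constructor
  · rintro ⟨p, ⟨u, hu, v, hv, hp⟩, w, hw, ht⟩
    exact ⟨u, hu, v, hv, w, hw, p, hp, w, rfl, ht⟩
  · rintro ⟨u, hu, v, hv, w, hw, p, hp, w', rfl, ht⟩
    exact ⟨p, ⟨u, hu, v, hv, hp⟩, w', hw, ht⟩

lemma inv (hLA : ∀ x y z : H, hmul op (op x y) {z} = hmul op (op z y) {x})
    (U V W : Set H) :
    hmul op (hmul op U V) W = hmul op (hmul op W V) U := by
  ext t
  rw [mem_m3, mem_m3]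
  constructor
  · rintro ⟨u, hu, v, hv, w, hw, ht⟩
    exact ⟨w, hw, v, hv, u, hu, by rwa [hLA] at ht⟩
  · rintro ⟨w, hw, v, hv, u, hu, ht⟩
    exact ⟨u, hu, v, hv, w, hw, by rwa [hLA]⟩

lemma medial (hLA : ∀ x y z : H, hmul op (op x y) {z} = hmul op (op z y) {x})
    (A B C D : Set H) :
    hmul op (hmul op A B) (hmul op C D) = hmul op (hmul op A C) (hmul op B D) := by
  calc hmul op (hmul op A B) (hmul op C D)
      = hmul op (hmul op (hmul op C D) B) A := inv op hLA _ _ _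
    _ = hmul op (hmul op (hmul op B D) C) A := by rw [inv op hLA C D B]
    _ = hmul op (hmul op A C) (hmul op B D) := (inv op hLA _ _ _).symm

lemma e_id (e : H) (he : ∀ a : H, op e a = {a}) (U : Set H) :
    hmul op {e} U = U := by
  ext t
  simp [hmul, he]

lemma L2 (hLA : ∀ x y z : H, hmul op (op x y) {z} = hmul op (op z y) {x})
    (e : H) (he : ∀ a : H, op e a = {a}) (U V W : Set H) :
    hmul op U (hmul op V W) = hmul op V (hmul op U W) := by
  calc hmul op U (hmul op V W)
      = hmul op (hmul op {e} U) (hmul op V W) := by rw [e_id op e he]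
    _ = hmul op (hmul op {e} V) (hmul op U W) := medial op hLA _ _ _ _
    _ = hmul op V (hmul op U W) := by rw [e_id op e he]

lemma paramedial (hLA : ∀ x y z : H, hmul op (op x y) {z} = hmul op (op z y) {x})
    (e : H) (he : ∀ a : H, op e a = {a}) (A B C D : Set H) :
    hmul op (hmul op A B) (hmul op C D) = hmul op (hmul op D B) (hmul op C A) := by
  calc hmul op (hmul op A B) (hmul op C D)
      = hmul op C (hmul op (hmul op A B) D) := L2 op hLA e he _ _ _
    _ = hmul op C (hmul op (hmul op D B) A) := by rw [inv op hLA A B D]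
    _ = hmul op (hmul op D B) (hmul op C A) := L2 op hLA e he _ _ _

end StmtAux9

theorem stmt9 {H : Type*} (op : H → H → Set H)
    (hne : ∀ a b : H, (op a b).Nonempty)
    (hLA : ∀ x y z : H, hmul op (op x y) {z} = hmul op (op z y) {x})
    (e : H) (he : ∀ a : H, op e a = {a})
    (hir : ∀ a : H, ∃ x y : H, a ∈ hmul op (hmul op {x} (op a a)) {y})
    (B : Set H) (hBne : B.Nonempty) (hBB : hmul op B B ⊆ B)
    (hBi : hmul op (hmul op B Set.univ) B ⊆ B) :
    hmul op (hmul op B Set.univ) B = B := by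
  apply Set.Subset.antisymm hBi
  intro a ha
  obtain ⟨x, y, hxy⟩ := hir a
  have inv := StmtAux9.inv op hLA
  have L2 := StmtAux9.L2 op hLA e he
  have pm := StmtAux9.paramedial op hLA e he
  have mono := fun {A A' B B' : Set H} => StmtAux9.hmul_mono op (A := A) (A' := A') (B := B) (B' := B')
  -- notation
  let A : Set H := {a}
  let X : Set H := {x}
  let Y : Set H := {y}
  let S : Set H := hmul op (hmul op X (hmul op A A)) Y
  have ha' : a ∈ S := by
    show a ∈ hmul op (hmul op {x} (hmul op {a} {a})) {y}
    rwa [StmtAux9.hmul_sing op a a]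
  have e2 : S = hmul op (hmul op Y (hmul op X A)) A := by
    show hmul op (hmul op X (hmul op A A)) Y = _
    rw [L2 X A A, inv A (hmul op X A) Y]
  have hAS : A ⊆ S := singleton_subset_iff.mpr ha'
  let Q : Set H := hmul op Y (hmul op X S)
  have hPQ : hmul op Y (hmul op X A) ⊆ Q :=
    mono (Subset.refl Y) (mono (Subset.refl X) hAS)
  have haQ : a ∈ hmul op Q A := by
    have h0 : a ∈ hmul op (hmul op Y (hmul op X A)) A := e2 ▸ ha'
    exact mono hPQ (Subset.refl A) h0
  have c1 : hmul op X S = hmul op (hmul op Y (hmul op A A)) (hmul op X X) := by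
    show hmul op X (hmul op (hmul op X (hmul op A A)) Y) = _
    rw [L2 X (hmul op X (hmul op A A)) Y, pm X (hmul op A A) X Y]
  have c2 : Q = hmul op (hmul op Y (hmul op A A)) (hmul op Y (hmul op X X)) := by
    show hmul op Y (hmul op X S) = _
    rw [c1, L2 Y (hmul op Y (hmul op A A)) (hmul op X X)]
  have c3 : Q = hmul op (hmul op (hmul op A X) (hmul op A X)) (hmul op Y Y) := by
    rw [c2, pm Y (hmul op A A) Y (hmul op X X), pm X X A A]
  have c5 : Q = hmul op A (hmul op (hmul op (hmul op Y Y) (hmul op A X)) X) := by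
    rw [c3, inv (hmul op A X) (hmul op A X) (hmul op Y Y),
      L2 (hmul op (hmul op Y Y) (hmul op A X)) A X]
  have hAB : A ⊆ B := singleton_subset_iff.mpr ha
  have hQBH : Q ⊆ hmul op B Set.univ := by
    rw [c5]
    exact mono hAB (subset_univ _)
  exact mono hQBH hAB haQ
end
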